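/- Under within-type exchangeability, fix a type i ∈ {1,…,L}, a time t ≥ 0, a number δ > 0, and a count vector m = (m_1,…,m_L) with 0 ≤ m_l ≤ n_l for l ≠ i and 0 ≤ m_i ≤ n_i − 1. Define A := P( for each l ≠ i: T^{(l)}_j > t for 1 ≤ j ≤ m_l and T^{(l)}_j ≤ t for m_l < j ≤ n_l; and for type i: t < T^{(i)}_1 ≤ t+δ, T^{(i)}_j > t for 2 ≤ j ≤ m_i+1, and T^{(i)}_j ≤ t for m_i+1 < j ≤ n_i ). Then A = Σ_{j_1=0}^{n_1−m_1} ⋯ Σ_{j_i=0}^{n_i−m_i−1} ⋯ Σ_{j_L=0}^{n_L−m_L} (−1)^{j_1+⋯+j_L} (∏_{l≠i} C(n_l−m_l, j_l)) · C(n_i−m_i−1, j_i) · [ S(m+j+e_i; t) − S′(m+j; t, δ) ], where e_i is the i-th standard unit vector, and S′(k; t, δ) := P( T^{(l)}_r > t for every l and every 1 ≤ r ≤ k_l, and additionally T^{(i)}_{k_i+1} > t+δ ). -/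

import Mathlib

open MeasureTheory Finset
open scoped Classical

noncomputable def chi (p : Prop) : ℝ := if p then 1 else 0

lemma chi_and (p q : Prop) : chi (p ∧ q) = chi p * chi q := by
  unfold chi; by_cases hp : p <;> by_cases hq : q <;> simp [hp, hq]

lemma chi_not (p : Prop) : chi (¬ p) = 1 - chi p := by
  unfold chi; by_cases hp : p <;> simp [hp]

lemma chi_sub {p q : Prop} (h : q → p) : chi (p ∧ ¬ q) = chi p - chi q := by
  unfold chi; by_cases hp : p <;> by_cases hq : q <;> simp_all

lemma chi_prod {α : Type*} (s : Finset α) (p : α → Prop) :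
    ∏ r ∈ s, chi (p r) = chi (∀ r ∈ s, p r) := by
  unfold chi
  by_cases h : ∀ r ∈ s, p r
  · rw [Finset.prod_eq_one fun r hr => if_pos (h r hr), if_pos h]
  · rw [if_neg h]
    push_neg at h
    obtain ⟨r, hr, hpr⟩ := h
    exact Finset.prod_eq_zero hr (if_neg hpr)

lemma chi_congr {p q : Prop} (h : p ↔ q) : chi p = chi q := by simp [chi, h]

lemma integral_chi {Ω : Type*} [MeasurableSpace Ω] (P : Measure Ω) [IsFiniteMeasure P]
    {p : Ω → Prop} (h : MeasurableSet {ω | p ω}) :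
    ∫ ω, chi (p ω) ∂P = (P {ω | p ω}).toReal := by
  rw [← measureReal_def, ← MeasureTheory.integral_indicator_one h]
  refine integral_congr_ae (Filter.Eventually.of_forall fun ω => ?_)
  by_cases hp : p ω <;> simp [chi, hp, Set.indicator_apply, Set.mem_setOf_eq]

lemma integrable_chi {Ω : Type*} [MeasurableSpace Ω] (P : Measure Ω) [IsFiniteMeasure P]
    {p : Ω → Prop} (h : MeasurableSet {ω | p ω}) :
    Integrable (fun ω => chi (p ω)) P := by
  have : (fun ω => chi (p ω)) = Set.indicator {ω | p ω} 1 := by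
    ext ω; by_cases hp : p ω <;> simp [chi, hp, Set.indicator_apply, Set.mem_setOf_eq]
  rw [this]
  exact (integrable_const 1).indicator h

lemma exists_perm_maps {α : Type*} [Fintype α] [DecidableEq α] (s t : Finset α)
    (h : s.card = t.card) : ∃ σ : Equiv.Perm α, ∀ x, σ x ∈ t ↔ x ∈ s := by
  have hc : (sᶜ : Finset α).card = (tᶜ : Finset α).card := by
    simp [Finset.card_compl, h]
  let e1 : {x // x ∈ s} ≃ {x // x ∈ t} := Finset.equivOfCardEq h
  let e2 : {x // x ∈ (sᶜ : Finset α)} ≃ {x // x ∈ (tᶜ : Finset α)} := Finset.equivOfCardEq hc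
  let e2' : {x // ¬ x ∈ s} ≃ {x // ¬ x ∈ t} :=
    (Equiv.subtypeEquivRight (fun x => (Finset.mem_compl).symm)).trans
      (e2.trans (Equiv.subtypeEquivRight (fun x => Finset.mem_compl)))
  refine ⟨((Equiv.sumCompl (· ∈ s)).symm.trans ((e1.sumCongr e2').trans
    (Equiv.sumCompl (· ∈ t)))), fun x => ?_⟩
  by_cases hx : x ∈ s
  · simp only [Equiv.trans_apply, Equiv.sumCompl_symm_apply_of_pos hx, Equiv.sumCongr_apply,
      Sum.map_inl, Equiv.sumCompl_apply_inl]
    exact ⟨fun _ => hx, fun _ => (e1 ⟨x, hx⟩).2⟩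
  · simp only [Equiv.trans_apply, Equiv.sumCompl_symm_apply_of_neg hx, Equiv.sumCongr_apply,
      Sum.map_inr, Equiv.sumCompl_apply_inr]
    exact ⟨fun hmem => absurd hmem (e2' ⟨x, hx⟩).2, fun hmem => absurd hmem hx⟩

lemma exists_perm_maps' {α : Type*} [Fintype α] [DecidableEq α] (s t : Finset α) (a b : α)
    (ha : a ∈ s) (hb : b ∈ t) (h : s.card = t.card) :
    ∃ σ : Equiv.Perm α, σ a = b ∧ ∀ x, σ x ∈ t ↔ x ∈ s := by
  obtain ⟨σ₀, hσ₀⟩ := exists_perm_maps (s.erase a) (t.erase b)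
    (by rw [Finset.card_erase_of_mem ha, Finset.card_erase_of_mem hb, h])
  refine ⟨σ₀.trans (Equiv.swap (σ₀ a) b), ?_, fun x => ?_⟩
  · simp [Equiv.swap_apply_left]
  have hσ₀a : σ₀ a ∉ t.erase b := by rw [hσ₀]; simp
  by_cases hxa : x = a
  · subst hxa; simp [Equiv.swap_apply_left, hb, ha]
  simp only [Equiv.trans_apply]
  have hne : σ₀ x ≠ σ₀ a := fun hc => hxa (σ₀.injective hc)
  by_cases hx : x ∈ s
  · have : σ₀ x ∈ t.erase b := (hσ₀ x).mpr (Finset.mem_erase.mpr ⟨hxa, hx⟩)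
    rw [Equiv.swap_apply_of_ne_of_ne hne (Finset.mem_erase.mp this).1]
    simpa [hx] using (Finset.mem_erase.mp this).2
  · have hnot : σ₀ x ∉ t.erase b := fun hc => hx (Finset.mem_erase.mp ((hσ₀ x).mp hc)).2
    by_cases hxb : σ₀ x = b
    · rw [hxb, Equiv.swap_apply_right]
      constructor
      · intro hc
        exact absurd (Finset.mem_erase.mpr
          ⟨fun he => hxa (σ₀.injective (hxb.trans he.symm)), hc⟩) hσ₀a
      · intro hc; exact absurd hc hx
    · rw [Equiv.swap_apply_of_ne_of_ne hne hxb]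
      constructor
      · intro hc; exact absurd (Finset.mem_erase.mpr ⟨hxb, hc⟩) hnot
      · intro hc; exact absurd hc hx

lemma card_filter_lt {n : ℕ} (N : ℕ) (h : N ≤ n) :
    ((univ : Finset (Fin n)).filter (fun r : Fin n => (r : ℕ) < N)).card = N := by
  have : ((univ : Finset (Fin n)).filter (fun r : Fin n => (r : ℕ) < N))
      = (Finset.range N).attachFin (fun m hm => lt_of_lt_of_le (Finset.mem_range.mp hm) h) := by
    ext r; simp [Finset.mem_attachFin]
  rw [this, Finset.card_attachFin, Finset.card_range]

lemma card_filter_ge {n : ℕ} (N : ℕ) (h : N ≤ n) :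
    ((univ : Finset (Fin n)).filter (fun r : Fin n => N ≤ (r : ℕ))).card = n - N := by
  have : ((univ : Finset (Fin n)).filter (fun r : Fin n => N ≤ (r : ℕ)))
      = ((univ : Finset (Fin n)).filter (fun r : Fin n => (r : ℕ) < N))ᶜ := by
    ext r; simp [not_lt]
  rw [this, Finset.card_compl, card_filter_lt N h, Fintype.card_fin]

lemma ms_forall {Ω : Type*} [MeasurableSpace Ω] {ι : Sort*} [Countable ι] (s : ι → Set Ω)
    (hs : ∀ x, MeasurableSet (s x)) : MeasurableSet {ω | ∀ x, ω ∈ s x} := by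
  rw [Set.setOf_forall]; exact .iInter hs

lemma ms_imp {Ω : Type*} [MeasurableSpace Ω] (p : Prop) (s : Set Ω)
    (hs : MeasurableSet s) : MeasurableSet {ω | p → ω ∈ s} := by
  by_cases hp : p
  · simp only [hp, true_implies]; exact hs
  · simp only [hp, false_implies, Set.setOf_true]; exact MeasurableSet.univ

lemma exchange_eq {Ω : Type*} [MeasurableSpace Ω] (P : Measure Ω)
    {L : ℕ} {n : Fin L → ℕ} (T : (l : Fin L) → Fin (n l) → Ω → ℝ)
    (hTmeas : ∀ l j, Measurable (T l j))
    (hexch : ∀ σ : (l : Fin L) → Equiv.Perm (Fin (n l)),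
      Measure.map (fun ω (l : Fin L) (j : Fin (n l)) => T l (σ l j) ω) P
        = Measure.map (fun ω (l : Fin L) (j : Fin (n l)) => T l j ω) P)
    (σ : (l : Fin L) → Equiv.Perm (Fin (n l)))
    {A : Set ((l : Fin L) → Fin (n l) → ℝ)} (hA : MeasurableSet A) :
    P ((fun ω (l : Fin L) (r : Fin (n l)) => T l (σ l r) ω) ⁻¹' A)
      = P ((fun ω (l : Fin L) (r : Fin (n l)) => T l r ω) ⁻¹' A) := by
  have h1 : Measurable (fun ω (l : Fin L) (r : Fin (n l)) => T l (σ l r) ω) :=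
    measurable_pi_lambda _ fun l => measurable_pi_lambda _ fun r => hTmeas l (σ l r)
  have h2 : Measurable (fun ω (l : Fin L) (r : Fin (n l)) => T l r ω) :=
    measurable_pi_lambda _ fun l => measurable_pi_lambda _ fun r => hTmeas l r
  rw [← Measure.map_apply h1 hA, ← Measure.map_apply h2 hA, hexch σ]

lemma ms_pi_forall {L : ℕ} {n : Fin L → ℕ} (p : (l : Fin L) → Fin (n l) → Prop)
    (q : (l : Fin L) → Fin (n l) → Set ℝ) (hq : ∀ l r, MeasurableSet (q l r)) :
    MeasurableSet {f : (l : Fin L) → Fin (n l) → ℝ | ∀ l r, p l r → f l r ∈ q l r} := by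
  have : {f : (l : Fin L) → Fin (n l) → ℝ | ∀ l r, p l r → f l r ∈ q l r}
      = {f : (l : Fin L) → Fin (n l) → ℝ | ∀ l, f ∈ {f : (l : Fin L) → Fin (n l) → ℝ |
          ∀ r, f ∈ {f : (l : Fin L) → Fin (n l) → ℝ | p l r → f ∈ (fun f => f l r) ⁻¹' q l r}}} := rfl
  rw [this]
  refine ms_forall _ fun l => ms_forall _ fun r => ms_imp _ _ ?_
  exact ((measurable_pi_apply r).comp (measurable_pi_apply l)) (hq l r)

lemma chi_prod' {α : Type*} [Fintype α] (p : α → Prop) :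
    ∏ r : α, chi (p r) = chi (∀ r, p r) := by
  rw [chi_prod univ p]; exact chi_congr (by simp)
theorem stmt_0
    {Ω : Type*} [MeasurableSpace Ω] (P : Measure Ω) [IsProbabilityMeasure P]
    {L : ℕ} (hL : 1 ≤ L) (n : Fin L → ℕ) (hn : ∀ l, 1 ≤ n l)
    (T : (l : Fin L) → Fin (n l) → Ω → ℝ)
    (hTmeas : ∀ l j, Measurable (T l j))
    (hexch : ∀ σ : (l : Fin L) → Equiv.Perm (Fin (n l)),
      Measure.map (fun ω (l : Fin L) (j : Fin (n l)) => T l (σ l j) ω) P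
        = Measure.map (fun ω (l : Fin L) (j : Fin (n l)) => T l j ω) P)
    (i : Fin L) (t δ : ℝ) (ht : 0 ≤ t) (hδ : 0 < δ)
    (m : Fin L → ℕ) (hm : ∀ l, l ≠ i → m l ≤ n l) (hmi : m i ≤ n i - 1) :
    (P {ω | (∀ l, l ≠ i → ∀ j : Fin (n l),
              ((j : ℕ) < m l → t < T l j ω) ∧ (m l ≤ (j : ℕ) → T l j ω ≤ t))
          ∧ (∀ j : Fin (n i),
              ((j : ℕ) = 0 → t < T i j ω ∧ T i j ω ≤ t + δ)
              ∧ (1 ≤ (j : ℕ) ∧ (j : ℕ) ≤ m i → t < T i j ω)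
              ∧ (m i + 1 ≤ (j : ℕ) → T i j ω ≤ t))}).toReal
    = ∑ j : (l : Fin L) → Fin ((if l = i then n i - m i - 1 else n l - m l) + 1),
        (-1 : ℝ) ^ (∑ l, (j l : ℕ))
          * (∏ l, (Nat.choose (if l = i then n i - m i - 1 else n l - m l) (j l) : ℝ))
          * ((P {ω | ∀ l, ∀ r : Fin (n l),
                (r : ℕ) < m l + (j l : ℕ) + (if l = i then 1 else 0) → t < T l r ω}).toReal
            - (P {ω | (∀ l, ∀ r : Fin (n l), (r : ℕ) < m l + (j l : ℕ) → t < T l r ω)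
                ∧ (∀ r : Fin (n i), (r : ℕ) = m i + (j i : ℕ) → t + δ < T i r ω)}).toReal) := by
  classical
  have hni : 1 ≤ n i := hn i
  have hmi' : m i + 1 ≤ n i := by omega
  set z : Fin (n i) := ⟨0, hni⟩ with hzdef
  set off : Fin L → ℕ := fun l => m l + (if l = i then 1 else 0) with hoffdef
  have hoffi : off i = m i + 1 := by simp [hoffdef]
  have hoffne : ∀ l, l ≠ i → off l = m l := by intro l hl; simp [hoffdef, hl]
  have hoffn : ∀ l, off l ≤ n l := by
    intro l; by_cases hl : l = i
    · subst hl; omega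
    · rw [hoffne l hl]; exact hm l hl
  set Base : (l : Fin L) → Finset (Fin (n l)) :=
    fun l => univ.filter (fun r : Fin (n l) => (r : ℕ) < off l) with hBasedef
  set Fail : (l : Fin L) → Finset (Fin (n l)) :=
    fun l => univ.filter (fun r : Fin (n l) => off l ≤ (r : ℕ)) with hFaildef
  have hmemBase : ∀ l (r : Fin (n l)), r ∈ Base l ↔ (r : ℕ) < off l := by
    intro l r; rw [hBasedef]; simp
  have hmemFail : ∀ l (r : Fin (n l)), r ∈ Fail l ↔ off l ≤ (r : ℕ) := by
    intro l r; rw [hFaildef]; simp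
  have hBasecard : ∀ l, (Base l).card = off l := by
    intro l; rw [hBasedef]; exact card_filter_lt _ (hoffn l)
  have hFailcard : ∀ l, (Fail l).card = n l - off l := by
    intro l; rw [hFaildef]; exact card_filter_ge _ (hoffn l)
  set 𝒮 : Finset ((l : Fin L) → Finset (Fin (n l))) :=
    Fintype.piFinset (fun l => (Fail l).powerset) with h𝒮def
  set GS : ((l : Fin L) → Finset (Fin (n l))) → Set Ω :=
    fun S => {ω | ∀ l, ∀ r ∈ Base l ∪ S l, t < T l r ω} with hGSdef
  set HS : ((l : Fin L) → Finset (Fin (n l))) → Set Ω :=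
    fun S => {ω | (∀ l, ∀ r ∈ Base l ∪ S l, t < T l r ω) ∧ t + δ < T i z ω} with hHSdef
  set CanG : (Fin L → ℕ) → Set Ω :=
    fun N => {ω | ∀ l, ∀ r : Fin (n l), (r : ℕ) < N l → t < T l r ω} with hCanGdef
  set CanH : (Fin L → ℕ) → Set Ω :=
    fun N => {ω | (∀ l, ∀ r : Fin (n l), (r : ℕ) < N l → t < T l r ω)
      ∧ (∀ r : Fin (n i), (r : ℕ) = N i → t + δ < T i r ω)} with hCanHdef
  set E' : Set Ω := {ω | (∀ l, ∀ r ∈ Base l, t < T l r ω) ∧ ¬ (t + δ < T i z ω)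
      ∧ (∀ l, ∀ r ∈ Fail l, ¬ (t < T l r ω))} with hE'def
  -- measurability
  have hmGS : ∀ S, MeasurableSet (GS S) := by
    intro S; rw [hGSdef]
    exact ms_forall _ fun l => ms_forall _ fun r =>
      ms_imp _ {ω | t < T l r ω} (measurableSet_lt measurable_const (hTmeas l r))
  have hmHS : ∀ S, MeasurableSet (HS S) := by
    intro S; rw [hHSdef]
    simp only [Set.setOf_and]
    exact MeasurableSet.inter
      (ms_forall _ fun l => ms_forall _ fun r =>
        ms_imp _ {ω | t < T l r ω} (measurableSet_lt measurable_const (hTmeas l r)))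
      (measurableSet_lt measurable_const (hTmeas i z))
  have hmCanG : ∀ N, MeasurableSet (CanG N) := by
    intro N; rw [hCanGdef]
    exact ms_forall _ fun l => ms_forall _ fun r =>
      ms_imp _ {ω | t < T l r ω} (measurableSet_lt measurable_const (hTmeas l r))
  have hmCanH : ∀ N, MeasurableSet (CanH N) := by
    intro N; rw [hCanHdef]
    simp only [Set.setOf_and]
    exact MeasurableSet.inter
      (ms_forall _ fun l => ms_forall _ fun r =>
        ms_imp _ {ω | t < T l r ω} (measurableSet_lt measurable_const (hTmeas l r)))
      (ms_forall _ fun r =>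
        ms_imp _ {ω | t + δ < T i r ω} (measurableSet_lt measurable_const (hTmeas i r)))
  have hmE' : MeasurableSet E' := by
    rw [hE'def]
    simp only [Set.setOf_and]
    refine MeasurableSet.inter (ms_forall _ fun l => ms_forall _ fun r =>
      ms_imp _ {ω | t < T l r ω} (measurableSet_lt measurable_const (hTmeas l r)))
      (MeasurableSet.inter ?_ ?_)
    · exact (measurableSet_lt measurable_const (hTmeas i z)).compl
    · exact ms_forall _ fun l => ms_forall _ fun r =>
        ms_imp _ {ω | t < T l r ω}ᶜ (measurableSet_lt measurable_const (hTmeas l r)).compl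
  -- Step A: identify the event
  have hE : {ω | (∀ l, l ≠ i → ∀ j : Fin (n l),
              ((j : ℕ) < m l → t < T l j ω) ∧ (m l ≤ (j : ℕ) → T l j ω ≤ t))
          ∧ (∀ j : Fin (n i),
              ((j : ℕ) = 0 → t < T i j ω ∧ T i j ω ≤ t + δ)
              ∧ (1 ≤ (j : ℕ) ∧ (j : ℕ) ≤ m i → t < T i j ω)
              ∧ (m i + 1 ≤ (j : ℕ) → T i j ω ≤ t))} = E' := by
    rw [hE'def]
    ext ω
    simp only [Set.mem_setOf_eq]
    constructor
    · rintro ⟨h1, h2⟩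
      refine ⟨?_, ?_, ?_⟩
      · intro l r hr
        rw [hmemBase l r] at hr
        by_cases hl : l = i
        · subst hl
          rw [hoffi] at hr
          rcases Nat.eq_zero_or_pos (r : ℕ) with h0 | h0
          · exact ((h2 r).1 h0).1
          · exact (h2 r).2.1 ⟨h0, by omega⟩
        · exact (h1 l hl r).1 (by rwa [hoffne l hl] at hr)
      · exact not_lt.mpr ((h2 z).1 rfl).2
      · intro l r hr
        rw [hmemFail l r] at hr
        by_cases hl : l = i
        · subst hl; rw [hoffi] at hr; exact not_lt.mpr ((h2 r).2.2 hr)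
        · exact not_lt.mpr ((h1 l hl r).2 (by rwa [hoffne l hl] at hr))
    · rintro ⟨hA, hD, hF⟩
      constructor
      · intro l hl r
        constructor
        · intro hr
          exact hA l r ((hmemBase l r).mpr (by rw [hoffne l hl]; omega))
        · intro hr
          exact not_lt.mp (hF l r ((hmemFail l r).mpr (by rw [hoffne l hl]; omega)))
      · intro r
        refine ⟨?_, fun h => ?_, fun hr => ?_⟩
        · intro h0
          have hrz : r = z := Fin.ext (by rw [hzdef, h0])
          refine ⟨hA i r ((hmemBase i r).mpr (by rw [hoffi]; omega)), ?_⟩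
          rw [hrz]; exact not_lt.mp hD
        · exact hA i r ((hmemBase i r).mpr (by rw [hoffi]; omega))
        · exact not_lt.mp (hF i r ((hmemFail i r).mpr (by rw [hoffi]; omega)))
  -- Step B+C: inclusion-exclusion expansion
  have hint : (P E').toReal = ∑ S ∈ 𝒮,
      (-1 : ℝ) ^ (∑ l, (S l).card) * ((P (GS S)).toReal - (P (HS S)).toReal) := by
    have hGχ : ∀ (S : (l : Fin L) → Finset (Fin (n l))) (ω : Ω), chi (ω ∈ GS S)
        = chi (∀ l, ∀ r ∈ Base l, t < T l r ω) * ∏ l, ∏ r ∈ S l, chi (t < T l r ω) := by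
      intro S ω
      have hiff : (ω ∈ GS S) ↔
          ((∀ l, ∀ r ∈ Base l, t < T l r ω) ∧ ∀ l, ∀ r ∈ S l, t < T l r ω) := by
        simp only [hGSdef, Set.mem_setOf_eq, Finset.mem_union]
        constructor
        · intro h
          exact ⟨fun l r hr => h l r (Or.inl hr), fun l r hr => h l r (Or.inr hr)⟩
        · rintro ⟨h1, h2⟩ l r hr
          rcases hr with h | h
          · exact h1 l r h
          · exact h2 l r h
      rw [chi_congr hiff, chi_and]
      congr 1
      calc chi (∀ l, ∀ r ∈ S l, t < T l r ω)
          = ∏ l, chi (∀ r ∈ S l, t < T l r ω) := (chi_prod' _).symm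
        _ = ∏ l, ∏ r ∈ S l, chi (t < T l r ω) :=
            Finset.prod_congr rfl fun l _ => (chi_prod (S l) _).symm
    have hHχ : ∀ (S : (l : Fin L) → Finset (Fin (n l))) (ω : Ω), chi (ω ∈ HS S)
        = chi (ω ∈ GS S) * chi (t + δ < T i z ω) := by
      intro S ω
      simp only [hHSdef, hGSdef, Set.mem_setOf_eq]
      exact chi_and _ _
    have hpt : ∀ ω, chi (ω ∈ E')
        = ∑ S ∈ 𝒮, (-1 : ℝ) ^ (∑ l, (S l).card) * (chi (ω ∈ GS S) - chi (ω ∈ HS S)) := by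
      intro ω
      have hexp : ∀ l, ∏ r ∈ Fail l, (1 - chi (t < T l r ω))
          = ∑ Sl ∈ (Fail l).powerset, (-1 : ℝ) ^ Sl.card * ∏ r ∈ Sl, chi (t < T l r ω) := by
        intro l
        rw [Finset.prod_congr rfl (fun r _ => show (1 : ℝ) - chi (t < T l r ω)
          = -chi (t < T l r ω) + 1 by ring), Finset.prod_add]
        refine Finset.sum_congr rfl fun Sl _ => ?_
        rw [Finset.prod_const_one, mul_one,
          Finset.prod_congr rfl (fun r _ => (neg_one_mul (chi (t < T l r ω))).symm),
          Finset.prod_mul_distrib, Finset.prod_const]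
      have hFχ : ∏ l, ∏ r ∈ Fail l, (1 - chi (t < T l r ω))
          = chi (∀ l, ∀ r ∈ Fail l, ¬ (t < T l r ω)) := by
        calc ∏ l, ∏ r ∈ Fail l, (1 - chi (t < T l r ω))
            = ∏ l, ∏ r ∈ Fail l, chi (¬ (t < T l r ω)) :=
              Finset.prod_congr rfl fun l _ =>
                Finset.prod_congr rfl fun r _ => (chi_not _).symm
          _ = ∏ l, chi (∀ r ∈ Fail l, ¬ (t < T l r ω)) :=
              Finset.prod_congr rfl fun l _ => chi_prod (Fail l) _
          _ = chi (∀ l, ∀ r ∈ Fail l, ¬ (t < T l r ω)) := chi_prod' _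
      have hE'χ : chi (ω ∈ E') = chi (∀ l, ∀ r ∈ Base l, t < T l r ω)
          * (chi (¬ (t + δ < T i z ω)) * chi (∀ l, ∀ r ∈ Fail l, ¬ (t < T l r ω))) := by
        simp only [hE'def, Set.mem_setOf_eq]
        rw [chi_and, chi_and]
      rw [hE'χ, chi_not, ← hFχ,
        Finset.prod_congr rfl (fun l (_ : l ∈ univ) => hexp l), Finset.prod_univ_sum,
        Finset.mul_sum, Finset.mul_sum]
      rw [← h𝒮def]
      refine Finset.sum_congr rfl fun S _ => ?_
      rw [hGχ S ω, hHχ S ω, hGχ S ω, Finset.prod_mul_distrib, Finset.prod_pow_eq_pow_sum]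
      ring
    have hiG : ∀ S, Integrable (fun ω => chi (ω ∈ GS S)) P := fun S =>
      integrable_chi P (by rw [Set.setOf_mem_eq]; exact hmGS S)
    have hiH : ∀ S, Integrable (fun ω => chi (ω ∈ HS S)) P := fun S =>
      integrable_chi P (by rw [Set.setOf_mem_eq]; exact hmHS S)
    calc (P E').toReal = ∫ ω, chi (ω ∈ E') ∂P := by
          rw [integral_chi P (by rw [Set.setOf_mem_eq]; exact hmE'), Set.setOf_mem_eq]
      _ = ∫ ω, ∑ S ∈ 𝒮, (-1 : ℝ) ^ (∑ l, (S l).card)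
            * (chi (ω ∈ GS S) - chi (ω ∈ HS S)) ∂P :=
          integral_congr_ae (Filter.Eventually.of_forall hpt)
      _ = ∑ S ∈ 𝒮, ∫ ω, (-1 : ℝ) ^ (∑ l, (S l).card)
            * (chi (ω ∈ GS S) - chi (ω ∈ HS S)) ∂P :=
          integral_finset_sum 𝒮 fun S _ => (((hiG S).sub (hiH S)).const_mul _)
      _ = ∑ S ∈ 𝒮, (-1 : ℝ) ^ (∑ l, (S l).card)
            * ((P (GS S)).toReal - (P (HS S)).toReal) := by
          refine Finset.sum_congr rfl fun S _ => ?_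
          rw [integral_const_mul _ _, integral_sub (hiG S) (hiH S),
            integral_chi P (by rw [Set.setOf_mem_eq]; exact hmGS S),
            integral_chi P (by rw [Set.setOf_mem_eq]; exact hmHS S),
            Set.setOf_mem_eq, Set.setOf_mem_eq]
  -- Step D: exchangeability
  have hSsub : ∀ S ∈ 𝒮, ∀ l, S l ⊆ Fail l := by
    intro S hS l
    rw [h𝒮def] at hS
    exact Finset.mem_powerset.mp (Fintype.mem_piFinset.mp hS l)
  have hKcard : ∀ S ∈ 𝒮, ∀ l, (Base l ∪ S l).card = off l + (S l).card := by
    intro S hS l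
    rw [Finset.card_union_of_disjoint, hBasecard]
    rw [Finset.disjoint_left]
    intro r hrB hrS
    have h1 := (hmemFail l r).mp (hSsub S hS l hrS)
    have h2 := (hmemBase l r).mp hrB
    omega
  have hNle : ∀ S ∈ 𝒮, ∀ l, off l + (S l).card ≤ n l := by
    intro S hS l
    rw [← hKcard S hS l]
    calc (Base l ∪ S l).card ≤ (univ : Finset (Fin (n l))).card := Finset.card_le_univ _
      _ = n l := by simp
  have hperm : ∀ S ∈ 𝒮, ∀ l, ∃ σ : Equiv.Perm (Fin (n l)),
      ∀ x, σ x ∈ Base l ∪ S l ↔ (x : ℕ) < off l + (S l).card := by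
    intro S hS l
    obtain ⟨σ, hσ⟩ := exists_perm_maps
      (univ.filter (fun r : Fin (n l) => (r : ℕ) < off l + (S l).card)) (Base l ∪ S l)
      (by rw [card_filter_lt _ (hNle S hS l), hKcard S hS l])
    exact ⟨σ, fun x => by rw [hσ x]; simp⟩
  have hGcan : ∀ S ∈ 𝒮, P (GS S) = P (CanG (fun l => off l + (S l).card)) := by
    intro S hS
    choose σ hσ using hperm S hS
    set A : Set ((l : Fin L) → Fin (n l) → ℝ) :=
      {f | ∀ l (r : Fin (n l)), (r : ℕ) < off l + (S l).card → t < f l r} with hAdef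
    have hmA : MeasurableSet A := by
      rw [hAdef]
      exact ms_pi_forall _ (fun l r => Set.Ioi t) (fun l r => measurableSet_Ioi)
    have hkey := exchange_eq P T hTmeas hexch σ hmA
    have h1 : (fun ω (l : Fin L) (r : Fin (n l)) => T l (σ l r) ω) ⁻¹' A = GS S := by
      rw [hAdef, hGSdef]
      ext ω
      simp only [Set.mem_preimage, Set.mem_setOf_eq]
      constructor
      · intro h l r hr
        have hx := hσ l ((σ l).symm r)
        rw [Equiv.apply_symm_apply] at hx
        have := h l ((σ l).symm r) (hx.mp hr)
        rwa [Equiv.apply_symm_apply] at this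
      · intro h l r hr
        exact h l (σ l r) ((hσ l r).mpr hr)
    have h2 : (fun ω (l : Fin L) (r : Fin (n l)) => T l r ω) ⁻¹' A
        = CanG (fun l => off l + (S l).card) := by
      rw [hAdef, hCanGdef]; rfl
    rw [← h1, hkey, h2]
  have hHcan : ∀ S ∈ 𝒮, P (HS S) = P (CanH (fun l => m l + (S l).card)) := by
    intro S hS
    have hji : m i + (S i).card < n i := by
      have := hNle S hS i; rw [hoffi] at this; omega
    obtain ⟨σi, hσia, hσi'⟩ := exists_perm_maps'
      (univ.filter (fun r : Fin (n i) => (r : ℕ) < m i + (S i).card + 1)) (Base i ∪ S i)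
      ⟨m i + (S i).card, hji⟩ z
      (by simp)
      (Finset.mem_union_left _ ((hmemBase i z).mpr (by simp [hzdef, hoffi])))
      (by rw [card_filter_lt _ hji, hKcard S hS i, hoffi]; omega)
    have hσi : ∀ x : Fin (n i), σi x ∈ Base i ∪ S i ↔ (x : ℕ) < m i + (S i).card + 1 := by
      intro x; rw [hσi' x]; simp
    choose σ0 hσ0 using hperm S hS
    set σ : (l : Fin L) → Equiv.Perm (Fin (n l)) := Function.update σ0 i σi with hσdef
    have hσupi : σ i = σi := by rw [hσdef]; exact Function.update_self i σi σ0
    have hσupne : ∀ l, l ≠ i → σ l = σ0 l := by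
      intro l hl; rw [hσdef]; exact Function.update_of_ne hl σi σ0
    set A : Set ((l : Fin L) → Fin (n l) → ℝ) :=
      {f | (∀ l (r : Fin (n l)), (r : ℕ) < m l + (S l).card → t < f l r)
        ∧ (∀ r : Fin (n i), (r : ℕ) = m i + (S i).card → t + δ < f i r)} with hAdef
    have hmA : MeasurableSet A := by
      rw [hAdef]
      rw [Set.setOf_and]
      refine MeasurableSet.inter
        (ms_pi_forall _ (fun l r => Set.Ioi t) (fun l r => measurableSet_Ioi)) ?_
      exact ms_forall _ fun r => ms_imp _ ((fun f : (l : Fin L) → Fin (n l) → ℝ => f i r) ⁻¹' Set.Ioi (t + δ))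
        (((measurable_pi_apply r).comp (measurable_pi_apply i)) measurableSet_Ioi)
    have hkey := exchange_eq P T hTmeas hexch σ hmA
    have h1 : (fun ω (l : Fin L) (r : Fin (n l)) => T l (σ l r) ω) ⁻¹' A = HS S := by
      rw [hAdef, hHSdef]
      ext ω
      simp only [Set.mem_preimage, Set.mem_setOf_eq]
      constructor
      · rintro ⟨hα, hβ⟩
        have hzfact : t + δ < T i z ω := by
          have := hβ ⟨m i + (S i).card, hji⟩ rfl
          rwa [hσupi, hσia] at this
        refine ⟨?_, hzfact⟩
        intro l r hr
        by_cases hl : l = i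
        · subst hl
          have hx : σi ((σi).symm r) = r := Equiv.apply_symm_apply _ _
          have hxlt : ((σi.symm r : Fin (n l)) : ℕ) < m l + (S l).card + 1 := by
            rw [← hx] at hr
            exact (hσi (σi.symm r)).mp hr
          rcases Nat.lt_or_ge ((σi.symm r : Fin (n l)) : ℕ) (m l + (S l).card) with hlt | hge
          · have := hα l (σi.symm r) hlt
            rwa [hσupi, hx] at this
          · have hxa : (σi.symm r : Fin (n l)) = ⟨m l + (S l).card, hji⟩ :=
              Fin.ext (by simp only [Fin.val_mk]; omega)
            have hrz2 : r = z := by rw [← hx, hxa, hσia]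
            rw [hrz2]
            linarith
        · have hx : σ0 l ((σ0 l).symm r) = r := Equiv.apply_symm_apply _ _
          have hxlt : ((((σ0 l).symm r) : Fin (n l)) : ℕ) < off l + (S l).card := by
            rw [← hσ0 l ((σ0 l).symm r), hx]; exact hr
          have := hα l ((σ0 l).symm r) (by rw [hoffne l hl] at hxlt; exact hxlt)
          rwa [hσupne l hl, hx] at this
      · rintro ⟨hK, hz⟩
        constructor
        · intro l r hr
          by_cases hl : l = i
          · subst hl
            rw [hσupi]
            exact hK l (σi r) ((hσi r).mpr (by omega))
          · rw [hσupne l hl]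
            exact hK l (σ0 l r) ((hσ0 l r).mpr (by rw [hoffne l hl]; omega))
        · intro r hr
          have hra : r = ⟨m i + (S i).card, hji⟩ := Fin.ext (by simp only [Fin.val_mk]; exact hr)
          rw [hra, hσupi, hσia]
          exact hz
    have h2 : (fun ω (l : Fin L) (r : Fin (n l)) => T l r ω) ⁻¹' A
        = CanH (fun l => m l + (S l).card) := by
      rw [hAdef, hCanHdef]; rfl
    rw [← h1, hkey, h2]
  -- Step E: group by sizes and reindex
  have hfinal : (∑ S ∈ 𝒮, (-1 : ℝ) ^ (∑ l, (S l).card) *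
        ((P (CanG (fun l => off l + (S l).card))).toReal
          - (P (CanH (fun l => m l + (S l).card))).toReal))
      = ∑ j : (l : Fin L) → Fin ((if l = i then n i - m i - 1 else n l - m l) + 1),
        (-1 : ℝ) ^ (∑ l, (j l : ℕ))
          * (∏ l, (Nat.choose (if l = i then n i - m i - 1 else n l - m l) (j l) : ℝ))
          * ((P (CanG (fun l => off l + (j l : ℕ)))).toReal
            - (P (CanH (fun l => m l + (j l : ℕ)))).toReal) := by
    have hcFail : ∀ l, (Fail l).card = (if l = i then n i - m i - 1 else n l - m l) := by
      intro l
      rw [hFailcard l]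
      by_cases hl : l = i
      · subst hl; rw [hoffi, if_pos rfl]; omega
      · rw [hoffne l hl, if_neg hl]
    set F : (Fin L → ℕ) → ℝ := fun v => (-1 : ℝ) ^ (∑ l, v l) *
      ((P (CanG (fun l => off l + v l))).toReal - (P (CanH (fun l => m l + v l))).toReal)
      with hFdef
    have hmaps : ∀ S ∈ 𝒮, (fun l => (S l).card) ∈ Fintype.piFinset
        (fun l => Finset.range ((if l = i then n i - m i - 1 else n l - m l) + 1)) := by
      intro S hS
      rw [Fintype.mem_piFinset]
      intro l
      rw [Finset.mem_range, Nat.lt_succ_iff, ← hcFail l]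
      exact Finset.card_le_card (hSsub S hS l)
    calc ∑ S ∈ 𝒮, (-1 : ℝ) ^ (∑ l, (S l).card) *
        ((P (CanG (fun l => off l + (S l).card))).toReal
          - (P (CanH (fun l => m l + (S l).card))).toReal)
        = ∑ S ∈ 𝒮, F (fun l => (S l).card) := by
          refine Finset.sum_congr rfl fun S _ => ?_
          rw [hFdef]
      _ = ∑ v ∈ Fintype.piFinset
            (fun l => Finset.range ((if l = i then n i - m i - 1 else n l - m l) + 1)),
          ∑ S ∈ 𝒮.filter (fun S => (fun l => (S l).card) = v), F (fun l => (S l).card) :=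
          (Finset.sum_fiberwise_of_maps_to hmaps _).symm
      _ = ∑ v ∈ Fintype.piFinset
            (fun l => Finset.range ((if l = i then n i - m i - 1 else n l - m l) + 1)),
          (∏ l, ((if l = i then n i - m i - 1 else n l - m l).choose (v l) : ℝ)) * F v := by
          refine Finset.sum_congr rfl fun v hv => ?_
          rw [Finset.sum_congr rfl (fun S hS => by rw [(Finset.mem_filter.mp hS).2])]
          rw [Finset.sum_const]
          have hfib : 𝒮.filter (fun S => (fun l => (S l).card) = v)
              = Fintype.piFinset (fun l => Finset.powersetCard (v l) (Fail l)) := by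
            ext S
            simp only [Finset.mem_filter, h𝒮def, Fintype.mem_piFinset, Finset.mem_powerset,
              Finset.mem_powersetCard, funext_iff]
            constructor
            · rintro ⟨h1, h2⟩ l
              exact ⟨h1 l, h2 l⟩
            · intro h
              exact ⟨fun l => (h l).1, fun l => (h l).2⟩
          rw [hfib, Fintype.card_piFinset]
          rw [nsmul_eq_mul, Nat.cast_prod]
          congr 1
          refine Finset.prod_congr rfl fun l _ => ?_
          rw [Finset.card_powersetCard, hcFail l]
      _ = ∑ j : (l : Fin L) → Fin ((if l = i then n i - m i - 1 else n l - m l) + 1),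
          (-1 : ℝ) ^ (∑ l, (j l : ℕ))
            * (∏ l, (Nat.choose (if l = i then n i - m i - 1 else n l - m l) (j l) : ℝ))
            * ((P (CanG (fun l => off l + (j l : ℕ)))).toReal
              - (P (CanH (fun l => m l + (j l : ℕ)))).toReal) := by
          refine (Finset.sum_nbij'
            (fun (j : (l : Fin L) → Fin ((if l = i then n i - m i - 1 else n l - m l) + 1)) =>
              (fun l => (j l : ℕ)))
            (fun v => (fun l => (⟨min (v l) (if l = i then n i - m i - 1 else n l - m l),
              Nat.lt_succ_of_le (Nat.min_le_right _ _)⟩ :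
                Fin ((if l = i then n i - m i - 1 else n l - m l) + 1))))
            (fun j _ => Fintype.mem_piFinset.mpr fun l => Finset.mem_range.mpr (j l).isLt)
            (fun v _ => Finset.mem_univ _)
            (fun j _ => by
              funext l
              refine Fin.ext ?_
              simp only [Fin.val_mk]
              exact Nat.min_eq_left (Nat.lt_succ_iff.mp (j l).isLt))
            (fun v hv => by
              funext l
              have := Finset.mem_range.mp (Fintype.mem_piFinset.mp hv l)
              simp only [Fin.val_mk]
              exact Nat.min_eq_left (by omega))
            (fun j _ => by rw [hFdef]; ring)).symm
  rw [hE, hint]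
  rw [Finset.sum_congr rfl (fun S hS => by rw [hGcan S hS, hHcan S hS]), hfinal]
  refine Finset.sum_congr rfl fun j _ => ?_
  have h1 : (fun l => off l + (j l : ℕ)) = (fun l => m l + (j l : ℕ) + if l = i then 1 else 0) := by
    funext l; rw [hoffdef]; ring
  rw [h1]
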